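/- Let λ₁ ≥ ⋯ ≥ λ_k > 0 with k ≥ 2 and σ > 0. Then (∏_{l=1}^k (λ_l+σ²))^{1/k} · ( ∑_{l=1}^k λ_l/(λ_l+σ²)² − k(∏_{l=1}^k λ_l/(λ_l+σ²)²)^{1/k} ) ≥ (λ_k+σ²) · ( max_{l≤k} √λ_l/(λ_l+σ²) − min_{l≤k} √λ_l/(λ_l+σ²) )². -/

import Mathlib

open Finset Real

lemma amgm_uniform (k : ℕ) (hk : 0 < k) (a : Fin k → ℝ) (ha : ∀ i, 0 ≤ a i) :
    (k : ℝ) * (∏ i, a i) ^ ((1 : ℝ) / k) ≤ ∑ i, a i := by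
  have hk' : (k : ℝ) ≠ 0 := Nat.cast_ne_zero.mpr hk.ne'
  have h := Real.geom_mean_le_arith_mean_weighted Finset.univ
    (fun _ : Fin k => 1 / k) a (fun i _ => by positivity)
    (by simp [Finset.sum_const, Finset.card_univ]; field_simp) (fun i _ => ha i)
  have hprod : ∏ i, a i ^ ((1:ℝ)/k) = (∏ i, a i) ^ ((1:ℝ)/k) :=
    Real.finset_prod_rpow Finset.univ a (fun i _ => ha i) _
  rw [hprod] at h
  have hsum : ∑ i, (1/(k:ℝ)) * a i = (1/(k:ℝ)) * ∑ i, a i := by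
    rw [Finset.mul_sum]
  rw [hsum] at h
  calc (k : ℝ) * (∏ i, a i) ^ ((1 : ℝ) / k)
      ≤ (k : ℝ) * ((1/(k:ℝ)) * ∑ i, a i) := by
        apply mul_le_mul_of_nonneg_left h (by positivity)
    _ = ∑ i, a i := by field_simp

lemma tung_pair (k : ℕ) (hk : 2 ≤ k) (a : Fin k → ℝ) (ha : ∀ i, 0 < a i)
    (i j : Fin k) (hij : i ≠ j) :
    (Real.sqrt (a i) - Real.sqrt (a j))^2 ≤ ∑ l, a l - (k : ℝ) * (∏ l, a l) ^ ((1:ℝ)/k) := by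
  set b : Fin k → ℝ := fun l => if l = i ∨ l = j then Real.sqrt (a i * a j) else a l with hb
  have hbnn : ∀ l, 0 ≤ b l := by
    intro l; simp only [hb]; split
    · exact Real.sqrt_nonneg _
    · exact (ha l).le
  have hjmem : j ∈ Finset.univ.erase i := Finset.mem_erase.mpr ⟨Ne.symm hij, Finset.mem_univ _⟩
  have hrest : ∀ l ∈ (Finset.univ.erase i).erase j, b l = a l := by
    intro l hl
    simp only [Finset.mem_erase] at hl
    simp [hb, hl.1, hl.2.1]
  -- product equality
  have hprodb : ∏ l, b l = ∏ l, a l := by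
    rw [← Finset.mul_prod_erase Finset.univ b (Finset.mem_univ i),
        ← Finset.mul_prod_erase _ b hjmem,
        ← Finset.mul_prod_erase Finset.univ a (Finset.mem_univ i),
        ← Finset.mul_prod_erase _ a hjmem,
        Finset.prod_congr rfl hrest]
    have : b i * b j = a i * a j := by
      simp only [hb, if_pos (Or.inl rfl), if_pos (Or.inr rfl)]
      exact Real.mul_self_sqrt (mul_nonneg (ha i).le (ha j).le)
    rw [← mul_assoc, ← mul_assoc, this]
  -- sum difference
  have hsumb : ∑ l, a l = ∑ l, b l + (Real.sqrt (a i) - Real.sqrt (a j))^2 := by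
    rw [← Finset.add_sum_erase Finset.univ b (Finset.mem_univ i),
        ← Finset.add_sum_erase _ b hjmem,
        ← Finset.add_sum_erase Finset.univ a (Finset.mem_univ i),
        ← Finset.add_sum_erase _ a hjmem,
        Finset.sum_congr rfl hrest]
    have hbi : b i = Real.sqrt (a i * a j) := by simp [hb]
    have hbj : b j = Real.sqrt (a i * a j) := by simp [hb]
    have hsq : Real.sqrt (a i * a j) = Real.sqrt (a i) * Real.sqrt (a j) :=
      Real.sqrt_mul (ha i).le _
    have hai : Real.sqrt (a i) ^ 2 = a i := Real.sq_sqrt (ha i).le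
    have haj : Real.sqrt (a j) ^ 2 = a j := Real.sq_sqrt (ha j).le
    rw [hbi, hbj, hsq]
    ring_nf
    nlinarith [hai, haj]
  have hamgm := amgm_uniform k (by omega) b hbnn
  rw [hsumb, hprodb] at *
  linarith

theorem stmt_10 (σ : ℝ) (hσ : 0 < σ) (k : ℕ) (hk : 2 ≤ k) (lam : Fin k → ℝ)
    (hpos : ∀ l, 0 < lam l) (hdesc : ∀ i j : Fin k, i ≤ j → lam j ≤ lam i) :
    (∏ l, (lam l + σ^2)) ^ ((1 : ℝ) / k) *
      (∑ l, lam l / (lam l + σ^2)^2 -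
        (k : ℝ) * (∏ l, lam l / (lam l + σ^2)^2) ^ ((1 : ℝ) / k)) ≥
    (lam ⟨k - 1, by omega⟩ + σ^2) *
      (Finset.univ.sup' (⟨⟨0, by omega⟩, Finset.mem_univ _⟩)
          (fun l => Real.sqrt (lam l) / (lam l + σ^2)) -
       Finset.univ.inf' (⟨⟨0, by omega⟩, Finset.mem_univ _⟩)
          (fun l => Real.sqrt (lam l) / (lam l + σ^2)))^2 := by
  have hden : ∀ l, 0 < lam l + σ^2 := fun l => add_pos (hpos l) (pow_pos hσ 2)
  set a : Fin k → ℝ := fun l => lam l / (lam l + σ^2)^2 with hadef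
  have hapos : ∀ l, 0 < a l := fun l => by
    exact div_pos (hpos l) (pow_pos (hden l) 2)
  have hne : (Finset.univ : Finset (Fin k)).Nonempty :=
    ⟨⟨0, by omega⟩, Finset.mem_univ _⟩
  -- the function in sup'/inf' is sqrt ∘ a
  have hfeq : (fun l => Real.sqrt (lam l) / (lam l + σ^2)) = fun l => Real.sqrt (a l) := by
    funext l
    rw [hadef]
    rw [Real.sqrt_div (hpos l).le, Real.sqrt_sq (hden l).le]
  have hsup : Finset.univ.sup' hne (fun l => Real.sqrt (lam l) / (lam l + σ^2))
      = Real.sqrt (Finset.univ.sup' hne a) := by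
    rw [hfeq]
    exact (Finset.comp_sup'_eq_sup'_comp hne Real.sqrt
      (fun x y => Monotone.map_sup (fun _ _ h => Real.sqrt_le_sqrt h) x y)).symm
  have hinf : Finset.univ.inf' hne (fun l => Real.sqrt (lam l) / (lam l + σ^2))
      = Real.sqrt (Finset.univ.inf' hne a) := by
    rw [hfeq]
    exact (Finset.apply_inf'_eq_inf'_comp hne Real.sqrt
      (fun x y => Monotone.map_inf (fun _ _ h => Real.sqrt_le_sqrt h) x y)).symm
  obtain ⟨i, _, hi⟩ := Finset.exists_mem_eq_sup' hne a
  obtain ⟨j, _, hj⟩ := Finset.exists_mem_eq_inf' hne a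
  -- key inequality on bracket
  have hbracket : (Real.sqrt (Finset.univ.sup' hne a) - Real.sqrt (Finset.univ.inf' hne a))^2
      ≤ ∑ l, a l - (k : ℝ) * (∏ l, a l) ^ ((1:ℝ)/k) := by
    by_cases hij : i = j
    · have : Finset.univ.sup' hne a = Finset.univ.inf' hne a := by
        rw [hi, hj, hij]
      rw [this, sub_self]
      have := amgm_uniform k (by omega) a (fun l => (hapos l).le)
      nlinarith [this]
    · rw [hi, hj]
      exact tung_pair k hk a hapos i j hij
  -- product factor bound
  set c : ℝ := lam ⟨k - 1, by omega⟩ + σ^2 with hc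
  have hcpos : 0 < c := hden _
  have hprodge : c ≤ (∏ l, (lam l + σ^2)) ^ ((1 : ℝ) / k) := by
    have hlast : ∀ l : Fin k, c ≤ lam l + σ^2 := by
      intro l
      have : lam ⟨k-1, by omega⟩ ≤ lam l := by
        apply hdesc
        exact Fin.le_def.mpr (by have := l.isLt; simp only []; omega)
      linarith
    have h1 : c ^ k ≤ ∏ l, (lam l + σ^2) := by
      calc c ^ k = ∏ _l : Fin k, c := by simp
        _ ≤ ∏ l, (lam l + σ^2) :=
          Finset.prod_le_prod (fun l _ => hcpos.le) (fun l _ => hlast l)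
    calc c = (c ^ k) ^ ((1:ℝ)/k) := by
          rw [← Real.rpow_natCast c k, ← Real.rpow_mul hcpos.le]
          rw [mul_one_div, div_self (by positivity), Real.rpow_one]
      _ ≤ (∏ l, (lam l + σ^2)) ^ ((1 : ℝ) / k) :=
          Real.rpow_le_rpow (by positivity) h1 (by positivity)
  rw [ge_iff_le, hsup, hinf]
  calc c * (Real.sqrt (Finset.univ.sup' hne a) - Real.sqrt (Finset.univ.inf' hne a))^2
      ≤ (∏ l, (lam l + σ^2)) ^ ((1 : ℝ) / k) *
        (∑ l, a l - (k : ℝ) * (∏ l, a l) ^ ((1:ℝ)/k)) :=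
        mul_le_mul hprodge hbracket (by positivity) (le_trans hcpos.le hprodge)
    _ = _ := rfl
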